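/- Let 𝒜 be a Banach subalgebra of ℬ(ℓ²) that admits norm control in ℬ(ℓ²) (i.e., there is a continuous h : [0,∞)² → [0,∞) with ‖A⁻¹‖_𝒜 ≤ h(‖A‖_𝒜, ‖A⁻¹‖_{ℬ(ℓ²)}) whenever A ∈ 𝒜 and A⁻¹ ∈ ℬ(ℓ²)). If f : ℓ² → ℓ² is strictly monotonic with continuous bounded gradient ∇f taking values in 𝒜, then f is invertible and the inverse f⁻¹ has continuous bounded gradient in 𝒜, with ∇(f⁻¹)(y) = (∇f(f⁻¹(y)))⁻¹. -/

import Mathlib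

open Function Filter Topology

set_option maxHeartbeats 2000000 in
theorem stmt_7 {H : Type*} [NormedAddCommGroup H] [InnerProductSpace ℝ H] [CompleteSpace H]
    {𝒜 : Type*} [NormedRing 𝒜] [NormedAlgebra ℝ 𝒜] [CompleteSpace 𝒜]
    (ι : 𝒜 →ₐ[ℝ] (H →L[ℝ] H)) (hinj : Function.Injective ι)
    (Cemb : ℝ) (hemb : ∀ a : 𝒜, ‖ι a‖ ≤ Cemb * ‖a‖)
    -- norm control: inverses in ℬ(ℓ²) of elements of 𝒜 lie in 𝒜 with controlled norm
    (hfun : ℝ → ℝ → ℝ) (hfun_cont : Continuous fun p : ℝ × ℝ => hfun p.1 p.2)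
    (hnc : ∀ (a : 𝒜) (T : H ≃L[ℝ] H), ι a = (T : H →L[ℝ] H) →
      ∃ b : 𝒜, ι b = (T.symm : H →L[ℝ] H) ∧ ‖b‖ ≤ hfun ‖a‖ ‖(T.symm : H →L[ℝ] H)‖)
    (f : H → H) (m₀ : ℝ) (hm₀ : 0 < m₀)
    (hmono : ∀ x x' : H, m₀ * ‖x - x'‖ ^ 2 ≤ (inner ℝ (x - x') (f x - f x') : ℝ))
    (f' : H → 𝒜) (hdiff : ∀ x, HasFDerivAt f (ι (f' x)) x)
    (M : ℝ) (hbdd : ∀ x, ‖f' x‖ ≤ M)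
    (hcont : Continuous f') :
    Function.Bijective f ∧
      ∃ g : H → 𝒜,
        (∀ y, HasFDerivAt (Function.invFun f) (ι (g y)) y) ∧
        (∀ y, (ι (f' (Function.invFun f y))).comp (ι (g y)) = ContinuousLinearMap.id ℝ H ∧
              (ι (g y)).comp (ι (f' (Function.invFun f y))) = ContinuousLinearMap.id ℝ H) ∧
        (∃ M' : ℝ, ∀ y, ‖g y‖ ≤ M') ∧
        Continuous g := by
  classical
  have hM : 0 ≤ M := le_trans (norm_nonneg _) (hbdd 0)
  set L : ℝ := max (|Cemb| * M) m₀ with hLdef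
  have hL : 0 < L := lt_of_lt_of_le hm₀ (le_max_right _ _)
  have hmL : m₀ ≤ L := le_max_right _ _
  -- the derivative is bounded by L
  have hDb : ∀ x, ‖ι (f' x)‖ ≤ L := by
    intro x
    calc ‖ι (f' x)‖ ≤ Cemb * ‖f' x‖ := hemb _
      _ ≤ |Cemb| * ‖f' x‖ := mul_le_mul_of_nonneg_right (le_abs_self _) (norm_nonneg _)
      _ ≤ |Cemb| * M := mul_le_mul_of_nonneg_left (hbdd x) (abs_nonneg _)
      _ ≤ L := le_max_left _ _
  -- f is Lipschitz with constant L
  have hlip : LipschitzWith L.toNNReal f := by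
    rw [← lipschitzOnWith_univ]
    refine convex_univ.lipschitzOnWith_of_nnnorm_hasFDerivWithin_le
      (f' := fun x => ι (f' x)) (fun x _ => (hdiff x).hasFDerivWithinAt) ?_
    intro x _
    rw [← norm_toNNReal]
    exact Real.toNNReal_mono (hDb x)
  have hfLip : ∀ x x' : H, ‖f x - f x'‖ ≤ L * ‖x - x'‖ := by
    intro x x'
    have := hlip.dist_le_mul x x'
    rwa [dist_eq_norm, dist_eq_norm, Real.coe_toNNReal _ hL.le] at this
  -- anti-Lipschitz
  have hanti : ∀ x x' : H, m₀ * ‖x - x'‖ ≤ ‖f x - f x'‖ := by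
    intro x x'
    rcases eq_or_ne x x' with h | h
    · simp [h, mul_nonneg hm₀.le (norm_nonneg _)]
    · have hn : 0 < ‖x - x'‖ := by
        simpa [sub_eq_zero] using norm_pos_iff.mpr (sub_ne_zero.mpr h)
      have h1 := hmono x x'
      have h2 := real_inner_le_norm (x - x') (f x - f x')
      nlinarith
  have hinjf : Function.Injective f := by
    intro x x' hxx
    have := hanti x x'
    rw [hxx, sub_self, norm_zero] at this
    have : ‖x - x'‖ ≤ 0 := by nlinarith
    have : x - x' = 0 := norm_le_zero_iff.mp this
    exact sub_eq_zero.mp this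
  -- surjectivity via Banach fixed point
  have hsurj : Function.Surjective f := by
    intro y
    set t : ℝ := m₀ / L ^ 2 with htdef
    have ht : 0 < t := div_pos hm₀ (by positivity)
    set Φ : H → H := fun x => x - t • (f x - y) with hΦdef
    set k : ℝ := 1 - m₀ ^ 2 / L ^ 2 with hkdef
    have hk0 : 0 ≤ k := by
      have : m₀ ^ 2 ≤ L ^ 2 := by nlinarith
      have : m₀ ^ 2 / L ^ 2 ≤ 1 := by
        rw [div_le_one (by positivity)]; exact this
      rw [hkdef]; linarith
    have hk1 : k < 1 := by
      have : 0 < m₀ ^ 2 / L ^ 2 := by positivity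
      rw [hkdef]; linarith
    have hsq : ∀ x x' : H, ‖Φ x - Φ x'‖ ^ 2 ≤ k * ‖x - x'‖ ^ 2 := by
      intro x x'
      have hdiffΦ : Φ x - Φ x' = (x - x') - t • (f x - f x') := by
        simp only [hΦdef, smul_sub]
        abel
      rw [hdiffΦ, norm_sub_sq_real, real_inner_smul_right, norm_smul]
      have hip := hmono x x'
      have hnf := hfLip x x'
      have hnf2 : ‖f x - f x'‖ ^ 2 ≤ L ^ 2 * ‖x - x'‖ ^ 2 := by nlinarith [norm_nonneg (f x - f x'), norm_nonneg (x - x')]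
      have habs : |t| = t := abs_of_pos ht
      rw [Real.norm_eq_abs, habs, mul_pow]
      have ht2 : t ^ 2 * ‖f x - f x'‖ ^ 2 ≤ t ^ 2 * (L ^ 2 * ‖x - x'‖ ^ 2) :=
        mul_le_mul_of_nonneg_left hnf2 (by positivity)
      have hin : -(2 * (t * inner ℝ (x - x') (f x - f x'))) ≤ -(2 * (t * (m₀ * ‖x - x'‖ ^ 2))) := by
        have := mul_le_mul_of_nonneg_left hip (le_of_lt ht)
        linarith
      have hteq : t * L ^ 2 = m₀ := by
        rw [htdef, div_mul_cancel₀ _ (by positivity)]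
      have hmain : ‖x - x'‖ ^ 2 - 2 * (t * inner ℝ (x - x') (f x - f x')) + t ^ 2 * ‖f x - f x'‖ ^ 2
          ≤ (1 - 2 * (t * m₀) + t ^ 2 * L ^ 2) * ‖x - x'‖ ^ 2 := by nlinarith
      have h5 : 1 - 2 * (t * m₀) + t ^ 2 * L ^ 2 = k := by
        rw [hkdef, htdef]
        field_simp
        ring
      rw [h5] at hmain
      exact hmain
    set c : ℝ := Real.sqrt k with hcdef
    have hc0 : 0 ≤ c := Real.sqrt_nonneg _
    have hc1 : c < 1 := by
      rw [hcdef]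
      have := Real.sqrt_lt_sqrt hk0 hk1
      simpa using this.trans_le (by rw [Real.sqrt_one])
    have hΦlip : LipschitzWith c.toNNReal Φ := by
      apply LipschitzWith.of_dist_le_mul
      intro x x'
      rw [dist_eq_norm, dist_eq_norm, Real.coe_toNNReal _ hc0]
      have h1 : ‖Φ x - Φ x'‖ ^ 2 ≤ (c * ‖x - x'‖) ^ 2 := by
        have : (c * ‖x - x'‖) ^ 2 = k * ‖x - x'‖ ^ 2 := by
          rw [mul_pow, hcdef, Real.sq_sqrt hk0]
        rw [this]; exact hsq x x'
      have := Real.sqrt_le_sqrt h1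
      rwa [Real.sqrt_sq (norm_nonneg _), Real.sqrt_sq (by positivity)] at this
    have hcontr : ContractingWith c.toNNReal Φ := by
      constructor
      · rw [← Real.toNNReal_one]
        exact (Real.toNNReal_lt_toNNReal_iff one_pos).mpr hc1
      · exact hΦlip
    have hfix := hcontr.fixedPoint_isFixedPt
    refine ⟨ContractingWith.fixedPoint Φ hcontr, ?_⟩
    have hx : Φ (ContractingWith.fixedPoint Φ hcontr) = ContractingWith.fixedPoint Φ hcontr := hfix
    set x := ContractingWith.fixedPoint Φ hcontr
    have : t • (f x - y) = 0 := by
      have := hx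
      simp only [hΦdef] at this
      rwa [sub_eq_self] at this
    have : f x - y = 0 := by
      rcases smul_eq_zero.mp this with h | h
      · exact absurd h ht.ne'
      · exact h
    exact sub_eq_zero.mp this
  have hbij : Function.Bijective f := ⟨hinjf, hsurj⟩
  -- coercivity of the derivative
  have hco : ∀ x u : H, m₀ * ‖u‖ ^ 2 ≤ (inner ℝ u (ι (f' x) u) : ℝ) := by
    intro x u
    have hpath : HasDerivAt (fun s : ℝ => x + s • u) u 0 := by
      simpa using ((hasDerivAt_id (0 : ℝ)).smul_const u).const_add x
    have hD : HasDerivAt (fun s : ℝ => f (x + s • u)) (ι (f' x) u) 0 := by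
      have h0 : HasFDerivAt f (ι (f' (x + (0:ℝ) • u))) (x + (0:ℝ) • u) := hdiff _
      have := h0.comp_hasDerivAt 0 hpath
      simpa [Function.comp_def] using this
    rw [hasDerivAt_iff_tendsto_slope] at hD
    have hD' : Tendsto (fun s : ℝ => (inner ℝ u (slope (fun s : ℝ => f (x + s • u)) 0 s) : ℝ))
        (𝓝[>] (0:ℝ)) (𝓝 (inner ℝ u (ι (f' x) u) : ℝ)) := by
      exact Filter.Tendsto.inner tendsto_const_nhds
        (hD.mono_left (nhdsWithin_mono _ (fun s hs => ne_of_gt hs)))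
    refine ge_of_tendsto hD' ?_
    refine eventually_nhdsWithin_of_forall ?_
    intro s hs
    have hs0 : (0:ℝ) < s := hs
    have hmm := hmono (x + s • u) x
    have hxx : x + s • u - x = s • u := by abel
    rw [hxx] at hmm
    have hni : (inner ℝ (s • u) (f (x + s • u) - f x) : ℝ) = s * inner ℝ u (f (x + s • u) - f x) :=
      real_inner_smul_left u (f (x + s • u) - f x) s
    have hns : ‖s • u‖ ^ 2 = s ^ 2 * ‖u‖ ^ 2 := by
      rw [norm_smul, Real.norm_eq_abs, mul_pow, sq_abs]
    rw [hni, hns] at hmm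
    have hslope : slope (fun s : ℝ => f (x + s • u)) 0 s = s⁻¹ • (f (x + s • u) - f x) := by
      simp [slope_def_field, slope, zero_smul, add_zero]
    rw [hslope, real_inner_smul_right, inv_mul_eq_div, le_div_iff₀ hs0]
    nlinarith [hmm, hs0]
  -- the derivative, as a continuous linear equivalence (Lax-Milgram)
  have hT : ∀ x : H, ∃ T : H ≃L[ℝ] H, (T : H →L[ℝ] H) = ι (f' x) := by
    intro x
    set D : H →L[ℝ] H := ι (f' x) with hDdef
    set B : H →L[ℝ] H →L[ℝ] ℝ := (innerSL ℝ).comp D with hBdef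
    have hBco : IsCoercive B := by
      refine ⟨m₀, hm₀, fun u => ?_⟩
      have : (B u) u = (inner ℝ (D u) u : ℝ) := rfl
      rw [this, real_inner_comm]
      calc m₀ * ‖u‖ * ‖u‖ = m₀ * ‖u‖ ^ 2 := by ring
        _ ≤ _ := hco x u
    refine ⟨hBco.continuousLinearEquivOfBilin, ?_⟩
    ext u
    apply ext_inner_right ℝ
    intro w
    exact hBco.continuousLinearEquivOfBilin_apply u w
  choose T hTcoe using hT
  -- norm bound on the inverse of the derivative
  have hDlow : ∀ (x : H) (u : H), m₀ * ‖u‖ ≤ ‖ι (f' x) u‖ := by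
    intro x u
    rcases eq_or_ne u 0 with h | h
    · simp [h]
    · have h1 := hco x u
      have h2 := real_inner_le_norm u (ι (f' x) u)
      have h3 : 0 < ‖u‖ := norm_pos_iff.mpr h
      nlinarith
  have hTsymm : ∀ x : H, ‖((T x).symm : H →L[ℝ] H)‖ ≤ m₀⁻¹ := by
    intro x
    refine ContinuousLinearMap.opNorm_le_bound _ (by positivity) fun v => ?_
    have h1 : ι (f' x) ((T x).symm v) = v := by
      rw [← hTcoe x]
      exact (T x).apply_symm_apply v
    have h2 := hDlow x ((T x).symm v)
    rw [h1] at h2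
    simp only [ContinuousLinearEquiv.coe_coe]
    rw [inv_mul_eq_div, le_div_iff₀ hm₀]
    nlinarith [h2]
  -- the global inverse
  have hrInv : Function.RightInverse (Function.invFun f) f := Function.rightInverse_invFun hsurj
  have hglip : LipschitzWith (m₀⁻¹).toNNReal (Function.invFun f) := by
    apply LipschitzWith.of_dist_le_mul
    intro y y'
    rw [dist_eq_norm, dist_eq_norm, Real.coe_toNNReal _ (by positivity)]
    have := hanti (Function.invFun f y) (Function.invFun f y')
    rw [hrInv y, hrInv y'] at this
    rw [inv_mul_eq_div, le_div_iff₀ hm₀]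
    nlinarith [this]
  have hderiv_inv : ∀ y, HasFDerivAt (Function.invFun f)
      (((T (Function.invFun f y)).symm : H →L[ℝ] H)) y := by
    intro y
    refine HasFDerivAt.of_local_left_inverse (hglip.continuous.continuousAt) ?_
      (Eventually.of_forall hrInv)
    rw [hTcoe]
    exact hdiff _
  -- pull the inverse back to 𝒜
  have hb : ∀ x : H, ∃ b : 𝒜, ι b = ((T x).symm : H →L[ℝ] H) ∧
      ‖b‖ ≤ hfun ‖f' x‖ ‖((T x).symm : H →L[ℝ] H)‖ :=
    fun x => hnc (f' x) (T x) (hTcoe x).symm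
  choose b hb1 hb2 using hb
  refine ⟨hbij, fun y => b (Function.invFun f y), ?_, ?_, ?_, ?_⟩
  · intro y
    rw [hb1]
    exact hderiv_inv y
  · intro y
    constructor
    · rw [hb1, ← hTcoe]
      exact (T (Function.invFun f y)).coe_comp_coe_symm
    · rw [hb1, ← hTcoe]
      exact (T (Function.invFun f y)).coe_symm_comp_coe
  · -- uniform bound via compactness
    set K : Set (ℝ × ℝ) := Set.Icc 0 M ×ˢ Set.Icc 0 m₀⁻¹ with hKdef
    have hKc : IsCompact K := isCompact_Icc.prod isCompact_Icc
    have hKne : K.Nonempty := ⟨(0, 0), by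
      constructor <;> simp [Set.mem_Icc, hM, inv_nonneg.mpr hm₀.le]⟩
    obtain ⟨p, hpK, hpmax⟩ := hKc.exists_isMaxOn hKne hfun_cont.continuousOn
    refine ⟨hfun p.1 p.2, fun y => ?_⟩
    set x := Function.invFun f y
    refine le_trans (hb2 x) ?_
    exact hpmax (show (‖f' x‖, ‖((T x).symm : H →L[ℝ] H)‖) ∈ K from
      ⟨⟨norm_nonneg _, hbdd x⟩, ⟨norm_nonneg _, hTsymm x⟩⟩)
  · -- continuity
    have hunit : ∀ x : H, f' x * b x = 1 ∧ b x * f' x = 1 := by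
      intro x
      constructor
      · apply hinj
        rw [map_mul, map_one]
        show (ι (f' x)).comp (ι (b x)) = ContinuousLinearMap.id ℝ H
        rw [hb1, ← hTcoe]
        exact (T x).coe_comp_coe_symm
      · apply hinj
        rw [map_mul, map_one]
        show (ι (b x)).comp (ι (f' x)) = ContinuousLinearMap.id ℝ H
        rw [hb1, ← hTcoe]
        exact (T x).coe_symm_comp_coe
    have hbeq : ∀ x : H, b x = Ring.inverse (f' x) := by
      intro x
      have : Ring.inverse ((⟨f' x, b x, (hunit x).1, (hunit x).2⟩ : 𝒜ˣ) : 𝒜)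
          = ((⟨f' x, b x, (hunit x).1, (hunit x).2⟩ : 𝒜ˣ)⁻¹ : 𝒜ˣ) := Ring.inverse_unit _
      simpa using this.symm
    have : (fun y => b (Function.invFun f y))
        = fun y => Ring.inverse (f' (Function.invFun f y)) := by
      funext y
      exact hbeq _
    rw [this]
    rw [continuous_iff_continuousAt]
    intro y
    have h1 : ContinuousAt (Ring.inverse : 𝒜 → 𝒜) (f' (Function.invFun f y)) := by
      have := NormedRing.inverse_continuousAt
        (⟨f' (Function.invFun f y), b (Function.invFun f y),
          (hunit _).1, (hunit _).2⟩ : 𝒜ˣ)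
      simpa using this
    have h2 : ContinuousAt (fun y => f' (Function.invFun f y)) y :=
      (hcont.comp hglip.continuous).continuousAt
    exact ContinuousAt.comp (x := y) h1 h2
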